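/- arXiv:1504.05010 — 3 statements merged into one kernel-verified Lean document; each statement's English description precedes it below -/
import Mathlib

section
/- Let q > 2. There exists a constant c > 0, depending only on q, such that for all real numbers a, b one has | |a+b|^q − |a|^q − q·|a|^{q−2}·a·b | ≤ c·( |a|^{q−2}·b² + |b|^q ). -/
open Real Filter Set

private lemma aux_deriv_g (q : ℝ) (hq : 2 < q) (x : ℝ) :
    HasDerivAt (fun x : ℝ => |x| ^ (q - 2) * x) ((q - 1) * |x| ^ (q - 2)) x := by
  rcases lt_trichotomy x 0 with hx | hx | hx
  · have hne : -x ≠ 0 := neg_ne_zero.mpr hx.ne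
    have h1 : HasDerivAt (fun x : ℝ => -((-x) ^ (q - 1)))
        ((q - 1) * (-x) ^ (q - 2)) x := by
      have := ((Real.hasDerivAt_rpow_const (x := -x) (p := q - 1) (Or.inl hne)).comp x
        (hasDerivAt_neg x)).neg
      convert this using 1
      · rfl
      · rfl
      · rfl
      ring_nf
    have heq : (fun x : ℝ => |x| ^ (q - 2) * x) =ᶠ[nhds x] fun x : ℝ => -((-x) ^ (q - 1)) := by
      filter_upwards [Iio_mem_nhds hx] with y hy
      have hy' : (0:ℝ) < -y := by simpa using hy
      rw [abs_of_neg hy, show q - 1 = (q - 2) + 1 by ring, Real.rpow_add hy',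
        Real.rpow_one]
      ring
    rw [abs_of_neg hx]
    exact h1.congr_of_eventuallyEq heq
  · subst hx
    rw [hasDerivAt_iff_tendsto_slope]
    have h0 : |(0:ℝ)| ^ (q - 2) = 0 := by
      rw [abs_zero, Real.zero_rpow (by linarith)]
    rw [h0, mul_zero]
    have : Tendsto (fun y : ℝ => |y| ^ (q - 2)) (nhds 0) (nhds 0) := by
      have := ((Real.continuousAt_rpow_const |(0:ℝ)| (q-2) (Or.inr (by linarith))).comp
        continuous_abs.continuousAt).tendsto
      simpa [Function.comp_def, h0, Real.zero_rpow (show q - 2 ≠ 0 by linarith)] using this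
    apply squeeze_zero_norm _ (this.mono_left nhdsWithin_le_nhds)
    intro y
    rcases eq_or_ne y 0 with rfl | hy
    · simp only [slope_same, norm_zero]
      positivity
    · have : slope (fun x : ℝ => |x| ^ (q - 2) * x) 0 y = |y| ^ (q - 2) := by
        simp [slope, hy]
        field_simp
      rw [this, Real.norm_eq_abs, abs_of_nonneg (Real.rpow_nonneg (abs_nonneg y) _)]
  · have h1 : HasDerivAt (fun x : ℝ => x ^ (q - 1)) ((q - 1) * x ^ (q - 2)) x := by
      have := Real.hasDerivAt_rpow_const (x := x) (p := q - 1) (Or.inl hx.ne')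
      convert this using 2; ring
    have heq : (fun x : ℝ => |x| ^ (q - 2) * x) =ᶠ[nhds x] fun x : ℝ => x ^ (q - 1) := by
      filter_upwards [Ioi_mem_nhds hx] with y hy
      have hy' : (0:ℝ) < y := hy
      rw [abs_of_pos hy', show q - 1 = (q - 2) + 1 by ring, Real.rpow_add hy', Real.rpow_one]
    rw [abs_of_pos hx]
    exact h1.congr_of_eventuallyEq heq

private lemma aux_deriv_F (q : ℝ) (hq : 2 < q) (x : ℝ) :
    HasDerivAt (fun x : ℝ => |x| ^ q) (q * (|x| ^ (q - 2) * x)) x := by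
  rcases lt_trichotomy x 0 with hx | hx | hx
  · have hne : -x ≠ 0 := neg_ne_zero.mpr hx.ne
    have h1 : HasDerivAt (fun x : ℝ => (-x) ^ q) (q * ((-x) ^ (q - 2) * x)) x := by
      have := (Real.hasDerivAt_rpow_const (x := -x) (p := q) (Or.inl hne)).comp x
        (hasDerivAt_neg x)
      convert this using 1
      · rfl
      · rfl
      · rfl
      have hx' : (0:ℝ) < -x := by linarith
      rw [show q - 1 = (q - 2) + 1 by ring, Real.rpow_add hx', Real.rpow_one]
      ring
    have heq : (fun x : ℝ => |x| ^ q) =ᶠ[nhds x] fun x : ℝ => (-x) ^ q := by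
      filter_upwards [Iio_mem_nhds hx] with y hy
      rw [abs_of_neg hy]
    rw [abs_of_neg hx]
    exact h1.congr_of_eventuallyEq heq
  · subst hx
    rw [hasDerivAt_iff_tendsto_slope]
    have h0 : |(0:ℝ)| ^ (q - 2) = 0 := by
      rw [abs_zero, Real.zero_rpow (by linarith)]
    rw [h0]
    have hlim : Tendsto (fun y : ℝ => |y| ^ (q - 1)) (nhds 0) (nhds 0) := by
      have := ((Real.continuousAt_rpow_const |(0:ℝ)| (q-1) (Or.inr (by linarith))).comp
        continuous_abs.continuousAt).tendsto
      simpa [Function.comp_def, abs_zero, Real.zero_rpow (show q - 1 ≠ 0 by linarith)]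
        using this
    simp only [zero_mul, mul_zero]
    apply squeeze_zero_norm _ (hlim.mono_left nhdsWithin_le_nhds)
    intro y
    rcases eq_or_ne y 0 with rfl | hy
    · simp only [slope_same, norm_zero]
      positivity
    · have habs : |y| ≠ 0 := by simpa using hy
      have : ‖slope (fun x : ℝ => |x| ^ q) 0 y‖ = |y| ^ (q - 1) := by
        simp only [slope, vsub_eq_sub, sub_zero, abs_zero,
          Real.zero_rpow (show q ≠ 0 by linarith), smul_eq_mul, sub_zero,
          Real.norm_eq_abs, abs_mul, abs_inv, abs_abs,
          abs_of_nonneg (Real.rpow_nonneg (abs_nonneg y) q)]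
        rw [Real.rpow_sub_one habs]
        field_simp
      rw [this]
  · have h1 : HasDerivAt (fun x : ℝ => x ^ q) (q * (x ^ (q - 2) * x)) x := by
      have := Real.hasDerivAt_rpow_const (x := x) (p := q) (Or.inl hx.ne')
      convert this using 1
      rw [show q - 1 = (q - 2) + 1 by ring, Real.rpow_add hx, Real.rpow_one]
    have heq : (fun x : ℝ => |x| ^ q) =ᶠ[nhds x] fun x : ℝ => x ^ q := by
      filter_upwards [Ioi_mem_nhds hx] with y hy
      rw [abs_of_pos hy]
    rw [abs_of_pos hx]
    exact h1.congr_of_eventuallyEq heq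

theorem stmt_2 (q : ℝ) (hq : 2 < q) :
    ∃ c : ℝ, 0 < c ∧ ∀ a b : ℝ,
      |(|a + b| ^ q - |a| ^ q - q * |a| ^ (q - 2) * a * b)| ≤
        c * (|a| ^ (q - 2) * b ^ 2 + |b| ^ q) := by
  refine ⟨q * (q - 1) * 2 ^ (q - 2), mul_pos (mul_pos (by linarith) (by linarith)) (Real.rpow_pos_of_pos two_pos _), fun a b => ?_⟩
  set M := |a| + |b| with hM
  have hM0 : 0 ≤ M := by positivity
  set g : ℝ → ℝ := fun x => |x| ^ (q - 2) * x with hg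
  set s : Set ℝ := Set.uIcc a (a + b) with hs
  -- facts about points in s
  have hmem : ∀ x ∈ s, |x| ≤ M ∧ |x - a| ≤ |b| := by
    intro x hx
    rw [hs, Set.mem_uIcc] at hx
    constructor
    · rw [abs_le]
      rcases hx with ⟨h1, h2⟩ | ⟨h1, h2⟩ <;>
        constructor <;>
        [skip; skip; skip; skip] <;>
        · cases abs_cases a with
          | inl ha => cases abs_cases b with
            | inl hb => simp only [hM]; linarith [ha.1, hb.1, ha.2, hb.2]
            | inr hb => simp only [hM]; linarith [ha.1, hb.1, ha.2, hb.2]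
          | inr ha => cases abs_cases b with
            | inl hb => simp only [hM]; linarith [ha.1, hb.1, ha.2, hb.2]
            | inr hb => simp only [hM]; linarith [ha.1, hb.1, ha.2, hb.2]
    · rw [abs_le]
      rcases hx with ⟨h1, h2⟩ | ⟨h1, h2⟩ <;> constructor <;>
        · cases abs_cases b with
          | inl hb => linarith [hb.1, hb.2]
          | inr hb => linarith [hb.1, hb.2]
  -- Lipschitz bound for g on s
  have hglip : ∀ x ∈ s, |g x - g a| ≤ (q - 1) * M ^ (q - 2) * |b| := by
    intro x hx
    have has : a ∈ s := Set.left_mem_uIcc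
    have key : ‖g x - g a‖ ≤ (q - 1) * M ^ (q - 2) * ‖x - a‖ := by
      apply Convex.norm_image_sub_le_of_norm_hasDerivWithin_le
        (f' := fun y => (q - 1) * |y| ^ (q - 2))
        (fun y _ => (aux_deriv_g q hq y).hasDerivWithinAt)
        (fun y hy => ?_) (convex_uIcc _ _) has hx
      rw [Real.norm_eq_abs, abs_of_nonneg
        (mul_nonneg (by linarith) (Real.rpow_nonneg (abs_nonneg y) _))]
      have h2 : |y| ^ (q - 2) ≤ M ^ (q - 2) :=
        Real.rpow_le_rpow (abs_nonneg y) (hmem y hy).1 (by linarith)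
      nlinarith [Real.rpow_nonneg (abs_nonneg y) (q - 2)]
    rw [Real.norm_eq_abs, Real.norm_eq_abs] at key
    calc |g x - g a| ≤ (q - 1) * M ^ (q - 2) * |x - a| := key
      _ ≤ (q - 1) * M ^ (q - 2) * |b| := by
          have h1 : (0:ℝ) ≤ (q - 1) * M ^ (q - 2) :=
            mul_nonneg (by linarith) (Real.rpow_nonneg hM0 _)
          nlinarith [(hmem x hx).2]
  -- MVT for h(x) = |x|^q - q * g a * x
  have hmain : |(|a + b| ^ q - |a| ^ q - q * g a * b)| ≤ q * (q - 1) * M ^ (q - 2) * |b| * |b| := by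
    have key : ‖(|a + b| ^ q - q * g a * (a + b)) - (|a| ^ q - q * g a * a)‖ ≤
        (q * (q - 1) * M ^ (q - 2) * |b|) * ‖(a + b) - a‖ := by
      apply Convex.norm_image_sub_le_of_norm_hasDerivWithin_le
        (f := fun x => |x| ^ q - q * g a * x)
        (f' := fun y => q * g y - q * g a)
        (fun y _ => (((aux_deriv_F q hq y).sub
          (((hasDerivAt_id y).const_mul (q * g a)))).congr_deriv (by ring)).hasDerivWithinAt)
        (fun y hy => ?_) (convex_uIcc _ _) Set.left_mem_uIcc Set.right_mem_uIcc
      show ‖q * g y - q * g a‖ ≤ q * (q - 1) * M ^ (q - 2) * |b|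
      rw [Real.norm_eq_abs, show q * g y - q * g a = q * (g y - g a) by ring, abs_mul,
        abs_of_pos (by linarith : (0:ℝ) < q)]
      have := hglip y hy
      nlinarith
    rw [Real.norm_eq_abs, Real.norm_eq_abs, add_sub_cancel_left] at key
    calc |(|a + b| ^ q - |a| ^ q - q * g a * b)| =
        |(|a + b| ^ q - q * g a * (a + b)) - (|a| ^ q - q * g a * a)| := by ring_nf
      _ ≤ (q * (q - 1) * M ^ (q - 2) * |b|) * |b| := key
      _ = q * (q - 1) * M ^ (q - 2) * |b| * |b| := by ring
  -- bound M ^ (q-2)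
  have hMbound : M ^ (q - 2) ≤ 2 ^ (q - 2) * (|a| ^ (q - 2) + |b| ^ (q - 2)) := by
    have h1 : M ≤ 2 * max |a| |b| := by
      rcases le_total |a| |b| with h | h
      · rw [max_eq_right h]; simp only [hM]; linarith
      · rw [max_eq_left h]; simp only [hM]; linarith
    have h2 : M ^ (q - 2) ≤ (2 * max |a| |b|) ^ (q - 2) :=
      Real.rpow_le_rpow hM0 h1 (by linarith)
    have h3 : (2 * max |a| |b|) ^ (q - 2) = 2 ^ (q - 2) * (max |a| |b|) ^ (q - 2) :=
      Real.mul_rpow (by norm_num) (le_max_iff.mpr (Or.inl (abs_nonneg a)))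
    have h4 : (max |a| |b|) ^ (q - 2) ≤ |a| ^ (q - 2) + |b| ^ (q - 2) := by
      rcases le_total |a| |b| with h | h
      · rw [max_eq_right h]
        nlinarith [Real.rpow_nonneg (abs_nonneg a) (q - 2)]
      · rw [max_eq_left h]
        nlinarith [Real.rpow_nonneg (abs_nonneg b) (q - 2)]
    calc M ^ (q - 2) ≤ 2 ^ (q - 2) * (max |a| |b|) ^ (q - 2) := h3 ▸ h2
      _ ≤ 2 ^ (q - 2) * (|a| ^ (q - 2) + |b| ^ (q - 2)) := by
          have : (0:ℝ) < 2 ^ (q - 2) := by positivity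
          nlinarith
  -- finish
  have hbq : |b| ^ (q - 2) * |b| ^ 2 = |b| ^ q := by
    rw [← Real.rpow_two, ← Real.rpow_add' (abs_nonneg b) (ne_of_gt (by linarith : (0:ℝ) < q - 2 + 2))]
    norm_num
  have hb2 : |b| * |b| = b ^ 2 := by rw [← abs_mul, ← sq, abs_sq]
  have hgab : g a = |a| ^ (q - 2) * a := rfl
  calc |(|a + b| ^ q - |a| ^ q - q * |a| ^ (q - 2) * a * b)|
      = |(|a + b| ^ q - |a| ^ q - q * g a * b)| := by
        simp only [hgab, ← mul_assoc]
    _ ≤ q * (q - 1) * M ^ (q - 2) * |b| * |b| := hmain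
    _ = q * (q - 1) * M ^ (q - 2) * b ^ 2 := by rw [mul_assoc, hb2]
    _ ≤ q * (q - 1) * (2 ^ (q - 2) * (|a| ^ (q - 2) + |b| ^ (q - 2))) * b ^ 2 := by
        have hqq : (0:ℝ) ≤ q * (q - 1) := by nlinarith
        exact mul_le_mul_of_nonneg_right (mul_le_mul_of_nonneg_left hMbound hqq) (sq_nonneg b)
    _ = q * (q - 1) * 2 ^ (q - 2) * (|a| ^ (q - 2) * b ^ 2 + |b| ^ q) := by
        rw [← hbq, sq_abs]; ring
end

section
/- Let Ω ⊂ ℝ⁴ be a bounded open set with 0 ∈ Ω, let α₄ = 2√2, and for δ > 0 let U_δ(x) = α₄ · δ / (δ² + |x|²). Then there exist constants C > 0 and δ₀ ∈ (0,1) such that for every δ ∈ (0, δ₀) one has | ∫_Ω U_δ(x)² dx − 16π² δ² log(1/δ) | ≤ C δ². -/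
open MeasureTheory Set Metric

lemma vol_ball_one : (volume (ball (0 : EuclideanSpace ℝ (Fin 4)) 1)).toReal = Real.pi ^ 2 / 2 := by
  rw [EuclideanSpace.volume_ball]
  have h3 : ((Fintype.card (Fin 4) : ℝ) / 2 + 1) = ((2:ℕ) + 1 : ℝ) := by norm_num
  rw [h3, Real.Gamma_nat_eq_factorial]
  have : (√Real.pi) ^ Fintype.card (Fin 4) = Real.pi ^ 2 := by
    rw [Fintype.card_fin]
    rw [show (4:ℕ) = 2*2 from rfl, pow_mul, Real.sq_sqrt Real.pi_pos.le]
  rw [this]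
  simp [ENNReal.toReal_ofReal, Real.pi_pos.le, Nat.factorial]
  positivity

lemma ftc_aux (δ ρ : ℝ) (hδ : 0 < δ) (hρ : 0 < ρ) :
    ∫ y in (0:ℝ)..ρ, y ^ 3 * ((δ^2 + y^2)^2)⁻¹
      = (1/2) * Real.log (δ^2+ρ^2) + (1/2) * (δ^2 * (δ^2+ρ^2)⁻¹)
        - (1/2) * Real.log (δ^2) - 1/2 := by
  have hpos : ∀ y : ℝ, 0 < δ^2 + y^2 := fun y => by positivity
  set F : ℝ → ℝ := fun y => (1/2) * Real.log (δ^2+y^2) + (1/2) * (δ^2 * (δ^2+y^2)⁻¹) with hF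
  have hderiv : ∀ y ∈ uIcc (0:ℝ) ρ, HasDerivAt F (y ^ 3 * ((δ^2 + y^2)^2)⁻¹) y := by
    intro y _
    have h1 : HasDerivAt (fun y : ℝ => δ^2 + y^2) (2*y) y := by
      simpa using (hasDerivAt_pow 2 y).const_add (δ^2)
    have hne := (hpos y).ne'
    have h2 : HasDerivAt (fun y => (1/2) * Real.log (δ^2+y^2)) ((1/2) * (2*y / (δ^2+y^2))) y :=
      (h1.log hne).const_mul _
    have h3 : HasDerivAt (fun y => (1/2) * (δ^2 * (δ^2+y^2)⁻¹))
        ((1/2) * (δ^2 * (-(2*y) / (δ^2+y^2)^2))) y :=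
      ((h1.inv hne).const_mul (δ^2)).const_mul _
    refine (h2.add h3).congr_deriv ?_
    field_simp
    ring
  have hint : IntervalIntegrable (fun y => y ^ 3 * ((δ^2 + y^2)^2)⁻¹) volume 0 ρ := by
    apply Continuous.intervalIntegrable
    exact (continuous_pow 3).mul (Continuous.inv₀ (by continuity) fun y => by positivity)
  rw [intervalIntegral.integral_eq_sub_of_hasDerivAt hderiv hint]
  have h0 : δ^2 * (δ^2 + 0^2)⁻¹ = 1 := by field_simp; ring
  simp only [hF, h0]
  ring

lemma ball_int (δ ρ : ℝ) (hδ : 0 < δ) (hρ : 0 < ρ) :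
    ∫ x in ball (0 : EuclideanSpace ℝ (Fin 4)) ρ, ((δ^2 + ‖x‖^2)^2)⁻¹
      = Real.pi ^ 2 * ((Real.log (δ^2+ρ^2) + δ^2 * (δ^2+ρ^2)⁻¹) - Real.log (δ^2) - 1) := by
  set f : ℝ → ℝ := fun y => Set.indicator (Set.Iio ρ) (fun y => ((δ^2 + y^2)^2)⁻¹) y with hf
  have key : ∫ x in ball (0 : EuclideanSpace ℝ (Fin 4)) ρ, ((δ^2 + ‖x‖^2)^2)⁻¹
      = ∫ x : EuclideanSpace ℝ (Fin 4), f ‖x‖ := by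
    rw [← integral_indicator measurableSet_ball]
    congr 1
    ext x
    simp only [hf, Set.indicator, mem_ball_zero_iff, Set.mem_Iio]
  rw [key, integral_fun_norm_addHaar volume f, finrank_euclideanSpace, Fintype.card_fin]
  have hsub : ∫ y in Ioi (0:ℝ), y ^ (4-1) • f y
      = ∫ y in (0:ℝ)..ρ, y ^ 3 * ((δ^2 + y^2)^2)⁻¹ := by
    have : ∀ y : ℝ, y ^ (4-1) • f y
        = Set.indicator (Set.Iio ρ) (fun y => y ^ 3 * ((δ^2 + y^2)^2)⁻¹) y := by
      intro y
      simp only [hf, Set.indicator, smul_eq_mul]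
      split <;> simp
    simp_rw [this]
    rw [setIntegral_indicator measurableSet_Iio]
    rw [Set.Ioi_inter_Iio, intervalIntegral.integral_of_le hρ.le, integral_Ioc_eq_integral_Ioo]
  rw [hsub, ftc_aux δ ρ hδ hρ, measureReal_def, vol_ball_one, nsmul_eq_mul, smul_eq_mul]
  ring

set_option maxHeartbeats 1000000 in
theorem stmt_10 (Ω : Set (EuclideanSpace ℝ (Fin 4))) (hΩo : IsOpen Ω)
    (hΩb : Bornology.IsBounded Ω) (h0 : (0 : EuclideanSpace ℝ (Fin 4)) ∈ Ω)
    (α₄ : ℝ) (hα : α₄ = 2 * Real.sqrt 2)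
    (U : ℝ → EuclideanSpace ℝ (Fin 4) → ℝ)
    (hU : ∀ δ x, U δ x = α₄ * δ / (δ ^ 2 + ‖x‖ ^ 2)) :
    ∃ C : ℝ, 0 < C ∧ ∃ δ₀ : ℝ, 0 < δ₀ ∧ δ₀ < 1 ∧ ∀ δ : ℝ, 0 < δ → δ < δ₀ →
      |(∫ x in Ω, (U δ x) ^ 2) - 16 * Real.pi ^ 2 * δ ^ 2 * Real.log (1 / δ)| ≤ C * δ ^ 2 := by
  obtain ⟨r, hr0, hrΩ⟩ := Metric.isOpen_iff.mp hΩo 0 h0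
  obtain ⟨R₀, hΩR₀⟩ := hΩb.subset_ball 0
  set R : ℝ := max R₀ (r + 1) with hR
  have hΩR : Ω ⊆ ball 0 R := hΩR₀.trans (ball_subset_ball (le_max_left _ _))
  have hrR : r < R := lt_of_lt_of_le (by linarith) (le_max_right _ _)
  have hRpos : 0 < R := hr0.trans hrR
  set K : ℝ := |Real.log (r^2)| + |Real.log (1+R^2)| + 1 with hK
  have hK1 : 1 ≤ K := by
    have := abs_nonneg (Real.log (r^2)); have := abs_nonneg (Real.log (1+R^2)); simp only [hK]; linarith
  refine ⟨8 * Real.pi ^ 2 * K, by positivity, 1/2, by norm_num, by norm_num, ?_⟩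
  intro δ hδ0 hδ
  have hδ1 : δ < 1 := by linarith
  have hα2 : α₄ ^ 2 = 8 := by
    rw [hα, mul_pow, Real.sq_sqrt (by norm_num : (2:ℝ) ≥ 0)]; norm_num
  -- rewrite the integrand
  have hptw : ∀ x : EuclideanSpace ℝ (Fin 4),
      (U δ x) ^ 2 = (8 * δ^2) * ((δ^2 + ‖x‖^2)^2)⁻¹ := by
    intro x
    have hpos : (0:ℝ) < δ^2 + ‖x‖^2 := by positivity
    rw [hU, div_pow, mul_pow, hα2, div_eq_mul_inv]
  have hsplit : (∫ x in Ω, (U δ x) ^ 2)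
      = (8 * δ^2) * ∫ x in Ω, ((δ^2 + ‖x‖^2)^2)⁻¹ := by
    simp_rw [hptw]
    exact integral_const_mul _ _
  -- integrability
  have hcont : Continuous fun x : EuclideanSpace ℝ (Fin 4) => ((δ^2 + ‖x‖^2)^2)⁻¹ := by
    exact Continuous.inv₀ (by continuity) fun x => by positivity
  have hintR : IntegrableOn (fun x : EuclideanSpace ℝ (Fin 4) => ((δ^2 + ‖x‖^2)^2)⁻¹)
      (ball 0 R) volume :=
    (hcont.continuousOn.integrableOn_compact (isCompact_closedBall _ R)).mono_set
      ball_subset_closedBall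
  have hintΩ : IntegrableOn (fun x : EuclideanSpace ℝ (Fin 4) => ((δ^2 + ‖x‖^2)^2)⁻¹)
      Ω volume := hintR.mono_set hΩR
  have hnneg : ∀ (s : Set (EuclideanSpace ℝ (Fin 4))),
      0 ≤ᶠ[ae (volume.restrict s)] fun x : EuclideanSpace ℝ (Fin 4) => ((δ^2 + ‖x‖^2)^2)⁻¹ :=
    fun s => Filter.Eventually.of_forall fun x => by positivity
  -- monotonicity
  have hlow : ∫ x in ball (0 : EuclideanSpace ℝ (Fin 4)) r, ((δ^2 + ‖x‖^2)^2)⁻¹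
      ≤ ∫ x in Ω, ((δ^2 + ‖x‖^2)^2)⁻¹ :=
    setIntegral_mono_set hintΩ (hnneg Ω) (HasSubset.Subset.eventuallyLE hrΩ)
  have hhigh : ∫ x in Ω, ((δ^2 + ‖x‖^2)^2)⁻¹
      ≤ ∫ x in ball (0 : EuclideanSpace ℝ (Fin 4)) R, ((δ^2 + ‖x‖^2)^2)⁻¹ :=
    setIntegral_mono_set hintR (hnneg _) (HasSubset.Subset.eventuallyLE hΩR)
  rw [ball_int δ r hδ0 hr0] at hlow
  rw [ball_int δ R hδ0 hRpos] at hhigh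
  -- the target
  have hlog : Real.log (1/δ) = -(1/2) * Real.log (δ^2) := by
    rw [one_div, Real.log_inv, Real.log_pow]
    push_cast; ring
  rw [hsplit, hlog]
  -- error bounds
  have hπ : (0:ℝ) < Real.pi := Real.pi_pos
  have hr2 : (0:ℝ) < δ^2 + r^2 := by positivity
  have hR2 : (0:ℝ) < δ^2 + R^2 := by positivity
  have hfrac_r_nn : (0:ℝ) ≤ δ^2 * (δ^2+r^2)⁻¹ := by positivity
  have hfrac_R_le : δ^2 * (δ^2+R^2)⁻¹ ≤ 1 := by
    rw [← div_eq_mul_inv, div_le_one hR2]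
    nlinarith [sq_nonneg R]
  have hlog_r_lb : Real.log (r^2) ≤ Real.log (δ^2+r^2) :=
    Real.log_le_log (by positivity) (by nlinarith)
  have hlog_R_ub : Real.log (δ^2+R^2) ≤ Real.log (1+R^2) :=
    Real.log_le_log hR2 (by nlinarith)
  have hlog_r_ub : Real.log (δ^2+r^2) ≤ Real.log (1+R^2) :=
    Real.log_le_log hr2 (by nlinarith)
  have hlog_R_lb : Real.log (r^2) ≤ Real.log (δ^2+R^2) :=
    Real.log_le_log (by positivity) (by nlinarith)
  have hfrac_r_le : δ^2 * (δ^2+r^2)⁻¹ ≤ 1 := by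
    rw [← div_eq_mul_inv, div_le_one hr2]
    nlinarith [sq_nonneg r]
  have hfrac_R_nn : (0:ℝ) ≤ δ^2 * (δ^2+R^2)⁻¹ := by positivity
  have habs1 : -|Real.log (r^2)| ≤ Real.log (r^2) := neg_abs_le _
  have habs2 : Real.log (1+R^2) ≤ |Real.log (1+R^2)| := le_abs_self _
  have habs3 : (0:ℝ) ≤ |Real.log (r^2)| := abs_nonneg _
  have habs4 : (0:ℝ) ≤ |Real.log (1+R^2)| := abs_nonneg _
  -- bound each error term by K
  have heR : (Real.log (δ^2+R^2) + δ^2 * (δ^2+R^2)⁻¹) - Real.log (δ^2) - 1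
      - (-(Real.log (δ^2))) ≤ K := by
    simp only [hK]; linarith
  have her : -K ≤ (Real.log (δ^2+r^2) + δ^2 * (δ^2+r^2)⁻¹) - Real.log (δ^2) - 1
      - (-(Real.log (δ^2))) := by
    simp only [hK]; linarith
  rw [abs_le]
  have hnn : (0:ℝ) ≤ 8 * Real.pi ^ 2 * δ^2 := by positivity
  have hnn2 : (0:ℝ) ≤ 8 * δ^2 := by positivity
  have hm1 := mul_le_mul_of_nonneg_left her hnn
  have hm2 := mul_le_mul_of_nonneg_left heR hnn
  have hmul_low := mul_le_mul_of_nonneg_left hlow hnn2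
  have hmul_high := mul_le_mul_of_nonneg_left hhigh hnn2
  constructor
  · nlinarith [hm1, hmul_low]
  · nlinarith [hm2, hmul_high]
end

section
/- Let Ω ⊂ ℝ⁵ be a bounded open set with 0 ∈ Ω, let α₅ = 15^{3/4}, and for δ > 0 let U_δ(x) = α₅ · δ^{3/2} / (δ² + |x|²)^{3/2}. Then there exist constants C > 0 and δ₀ ∈ (0,1) such that for every δ ∈ (0, δ₀) one has | ∫_Ω U_δ(x)² dx − δ² ∫_{ℝ⁵} U₁(x)² dx | ≤ C δ³, where U₁ is the bubble with δ = 1 (whose square is integrable on ℝ⁵). -/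
open MeasureTheory

theorem stmt_11 (Ω : Set (EuclideanSpace ℝ (Fin 5))) (hΩo : IsOpen Ω)
    (hΩb : Bornology.IsBounded Ω) (h0 : (0 : EuclideanSpace ℝ (Fin 5)) ∈ Ω)
    (α₅ : ℝ) (hα : α₅ = (15 : ℝ) ^ ((3 : ℝ) / 4))
    (U : ℝ → EuclideanSpace ℝ (Fin 5) → ℝ)
    (hU : ∀ δ x, U δ x = α₅ * δ ^ ((3 : ℝ) / 2) / (δ ^ 2 + ‖x‖ ^ 2) ^ ((3 : ℝ) / 2)) :
    Integrable (fun x => (U 1 x) ^ 2) ∧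
    ∃ C : ℝ, 0 < C ∧ ∃ δ₀ : ℝ, 0 < δ₀ ∧ δ₀ < 1 ∧ ∀ δ : ℝ, 0 < δ → δ < δ₀ →
      |(∫ x in Ω, (U δ x) ^ 2) - δ ^ 2 * ∫ x, (U 1 x) ^ 2| ≤ C * δ ^ 3 := by
  set g : ℝ → EuclideanSpace ℝ (Fin 5) → ℝ :=
    fun δ x => α₅ ^ 2 * δ ^ 3 / (δ ^ 2 + ‖x‖ ^ 2) ^ 3 with hg
  -- squaring identity
  have key : ∀ t : ℝ, 0 ≤ t → (t ^ ((3 : ℝ) / 2)) ^ 2 = t ^ 3 := by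
    intro t ht
    rw [← Real.rpow_natCast (t ^ ((3 : ℝ) / 2)) 2, ← Real.rpow_mul ht,
      show ((3 : ℝ) / 2 * (2 : ℕ)) = ((3 : ℕ) : ℝ) by push_cast; ring, Real.rpow_natCast]
  have hsq : ∀ δ : ℝ, 0 ≤ δ → ∀ x : EuclideanSpace ℝ (Fin 5), (U δ x) ^ 2 = g δ x := by
    intro δ hδ x
    have h1 : (0 : ℝ) ≤ δ ^ 2 + ‖x‖ ^ 2 := by positivity
    rw [hU, div_pow, mul_pow, key _ hδ, key _ h1]
  -- continuity
  have hcont : ∀ δ : ℝ, 0 < δ → Continuous (g δ) := by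
    intro δ hδ
    exact continuous_const.div (by fun_prop) (fun x => by positivity)
  -- integrability for 0 < δ ≤ 1
  have hbase : Integrable (fun x : EuclideanSpace ℝ (Fin 5) =>
      ((1 : ℝ) + ‖x‖ ^ 2) ^ (-(6 : ℝ) / 2)) :=
    integrable_rpow_neg_one_add_norm_sq (by rw [finrank_euclideanSpace_fin]; norm_num)
  have hbase' : ∀ x : EuclideanSpace ℝ (Fin 5),
      ((1 : ℝ) + ‖x‖ ^ 2) ^ (-(6 : ℝ) / 2) = (((1 : ℝ) + ‖x‖ ^ 2) ^ 3)⁻¹ := by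
    intro x
    rw [show (-(6 : ℝ) / 2) = -((3 : ℕ) : ℝ) by norm_num, Real.rpow_neg (by positivity),
      Real.rpow_natCast]
  have hint : ∀ δ : ℝ, 0 < δ → δ ≤ 1 → Integrable (g δ) := by
    intro δ hδ hδ1
    refine (hbase.const_mul (α₅ ^ 2 / δ ^ 3)).mono' (hcont δ hδ).aestronglyMeasurable
      (Filter.Eventually.of_forall fun x => ?_)
    have h1 : (0 : ℝ) < δ ^ 2 + ‖x‖ ^ 2 := by positivity
    have h2 : δ ^ 6 * (1 + ‖x‖ ^ 2) ^ 3 ≤ (δ ^ 2 + ‖x‖ ^ 2) ^ 3 := by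
      have hδsq : δ ^ 2 ≤ 1 := by nlinarith
      have hx2 : δ ^ 2 * ‖x‖ ^ 2 ≤ 1 * ‖x‖ ^ 2 :=
        mul_le_mul_of_nonneg_right hδsq (sq_nonneg _)
      have hmid : δ ^ 2 * (1 + ‖x‖ ^ 2) ≤ δ ^ 2 + ‖x‖ ^ 2 := by nlinarith
      calc δ ^ 6 * (1 + ‖x‖ ^ 2) ^ 3 = (δ ^ 2 * (1 + ‖x‖ ^ 2)) ^ 3 := by ring
        _ ≤ (δ ^ 2 + ‖x‖ ^ 2) ^ 3 := pow_le_pow_left₀ (by positivity) hmid 3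
    rw [hbase', Real.norm_eq_abs, abs_of_nonneg (by positivity)]
    have h3 : (0 : ℝ) < (1 + ‖x‖ ^ 2) ^ 3 := by positivity
    calc g δ x = α₅ ^ 2 * δ ^ 3 / (δ ^ 2 + ‖x‖ ^ 2) ^ 3 := rfl
      _ ≤ α₅ ^ 2 * δ ^ 3 / (δ ^ 6 * (1 + ‖x‖ ^ 2) ^ 3) := by gcongr <;> positivity
      _ = α₅ ^ 2 / δ ^ 3 * ((1 + ‖x‖ ^ 2) ^ 3)⁻¹ := by
          field_simp
  -- scaling identity
  have hscale : ∀ δ : ℝ, 0 < δ → ∫ x, g δ x = δ ^ 2 * ∫ x, g 1 x := by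
    intro δ hδ
    have hδ' : δ ≠ 0 := hδ.ne'
    have hcs := MeasureTheory.Measure.integral_comp_smul_of_nonneg
      (volume : Measure (EuclideanSpace ℝ (Fin 5))) (g δ) δ (hR := hδ.le)
    rw [finrank_euclideanSpace_fin] at hcs
    have hfun : (fun x : EuclideanSpace ℝ (Fin 5) => g δ (δ • x))
        = fun x : EuclideanSpace ℝ (Fin 5) => (δ ^ 3)⁻¹ * g 1 x := by
      funext x
      have hn : ‖δ • x‖ = δ * ‖x‖ := by
        rw [norm_smul, Real.norm_eq_abs, abs_of_pos hδ]
      have h1 : (0 : ℝ) < 1 + ‖x‖ ^ 2 := by positivity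
      have h2 : (0 : ℝ) < δ ^ 2 + (δ * ‖x‖) ^ 2 := by positivity
      simp only [hg, hn, one_pow, mul_one]
      field_simp
    rw [hfun, integral_const_mul, smul_eq_mul] at hcs
    have hδ5 : (δ : ℝ) ^ 5 ≠ 0 := by positivity
    have hδ3 : (δ : ℝ) ^ 3 ≠ 0 := by positivity
    have h2 : ∫ x, g δ x = δ ^ 5 * ((δ ^ 5)⁻¹ * ∫ x, g δ x) := by field_simp
    rw [h2, ← hcs]
    field_simp
  -- the ball inside Ω
  obtain ⟨r, hr0, hball⟩ := Metric.isOpen_iff.mp hΩo 0 h0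
  have hmb : MeasurableSet ((Metric.ball (0 : EuclideanSpace ℝ (Fin 5)) r)ᶜ) :=
    measurableSet_ball.compl
  have hnorm_of_mem : ∀ x : EuclideanSpace ℝ (Fin 5),
      x ∈ (Metric.ball (0 : EuclideanSpace ℝ (Fin 5)) r)ᶜ → r ≤ ‖x‖ := by
    intro x hx
    have := Set.notMem_of_mem_compl hx
    rw [Metric.mem_ball, dist_zero_right] at this
    linarith [not_lt.mp this]
  -- integrability of the tail majorant
  have hI : IntegrableOn (fun x : EuclideanSpace ℝ (Fin 5) => α₅ ^ 2 / ‖x‖ ^ 6)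
      ((Metric.ball (0 : EuclideanSpace ℝ (Fin 5)) r)ᶜ) := by
    refine Integrable.mono' ((hbase.const_mul (α₅ ^ 2 * ((1 + r ^ 2) / r ^ 2) ^ 3)).restrict)
      ((Measurable.aestronglyMeasurable (by fun_prop))) ?_
    rw [ae_restrict_iff' hmb]
    refine Filter.Eventually.of_forall fun x hx => ?_
    have hxr : r ≤ ‖x‖ := hnorm_of_mem x hx
    have hx0 : (0 : ℝ) < ‖x‖ := lt_of_lt_of_le hr0 hxr
    rw [hbase', Real.norm_eq_abs, abs_of_nonneg (by positivity)]
    have hrw : α₅ ^ 2 * ((1 + r ^ 2) / r ^ 2) ^ 3 * ((1 + ‖x‖ ^ 2) ^ 3)⁻¹ =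
        α₅ ^ 2 * (1 + r ^ 2) ^ 3 / (r ^ 2 * (1 + ‖x‖ ^ 2)) ^ 3 := by
      rw [div_pow, mul_pow]
      field_simp
    rw [hrw, div_le_div_iff₀ (by positivity) (by positivity)]
    have h6 : (r ^ 2 * (1 + ‖x‖ ^ 2)) ^ 3 ≤ ((1 + r ^ 2) * ‖x‖ ^ 2) ^ 3 :=
      pow_le_pow_left₀ (by positivity) (by nlinarith) 3
    calc α₅ ^ 2 * (r ^ 2 * (1 + ‖x‖ ^ 2)) ^ 3 ≤ α₅ ^ 2 * ((1 + r ^ 2) * ‖x‖ ^ 2) ^ 3 :=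
          mul_le_mul_of_nonneg_left h6 (by positivity)
      _ = α₅ ^ 2 * (1 + r ^ 2) ^ 3 * ‖x‖ ^ 6 := by ring
  set C₀ : ℝ := ∫ x in (Metric.ball (0 : EuclideanSpace ℝ (Fin 5)) r)ᶜ, α₅ ^ 2 / ‖x‖ ^ 6 with hC₀
  have hC₀0 : 0 ≤ C₀ := setIntegral_nonneg hmb fun x _ => by positivity
  refine ⟨?_, C₀ + 1, by linarith, 1 / 2, by norm_num, by norm_num, ?_⟩
  · have h1 : (fun x : EuclideanSpace ℝ (Fin 5) => (U 1 x) ^ 2) = g 1 :=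
      funext (hsq 1 zero_le_one)
    rw [h1]
    exact hint 1 one_pos le_rfl
  · intro δ hδ hδ2
    have hgi : Integrable (g δ) := hint δ hδ (by linarith)
    simp only [hsq δ hδ.le, hsq 1 zero_le_one]
    rw [← hscale δ hδ, ← integral_add_compl hΩo.measurableSet hgi,
      show (∫ x in Ω, g δ x) - ((∫ x in Ω, g δ x) + ∫ x in Ωᶜ, g δ x)
        = -(∫ x in Ωᶜ, g δ x) by ring, abs_neg,
      abs_of_nonneg (setIntegral_nonneg hΩo.measurableSet.compl fun x _ => by positivity)]
    calc (∫ x in Ωᶜ, g δ x)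
        ≤ ∫ x in (Metric.ball (0 : EuclideanSpace ℝ (Fin 5)) r)ᶜ, g δ x := by
          refine setIntegral_mono_set hgi.integrableOn
            (Filter.Eventually.of_forall fun x => by positivity)
            (HasSubset.Subset.eventuallyLE (Set.compl_subset_compl.mpr hball))
      _ ≤ ∫ x in (Metric.ball (0 : EuclideanSpace ℝ (Fin 5)) r)ᶜ,
            δ ^ 3 * (α₅ ^ 2 / ‖x‖ ^ 6) := by
          refine setIntegral_mono_on hgi.integrableOn (hI.const_mul (δ ^ 3)) hmb fun x hx => ?_
          have hxr : r ≤ ‖x‖ := hnorm_of_mem x hx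
          have hx0 : (0 : ℝ) < ‖x‖ := lt_of_lt_of_le hr0 hxr
          calc g δ x = α₅ ^ 2 * δ ^ 3 / (δ ^ 2 + ‖x‖ ^ 2) ^ 3 := rfl
            _ ≤ α₅ ^ 2 * δ ^ 3 / (‖x‖ ^ 2) ^ 3 := by
                have hle : (‖x‖ ^ 2) ^ 3 ≤ (δ ^ 2 + ‖x‖ ^ 2) ^ 3 :=
                  pow_le_pow_left₀ (by positivity) (by nlinarith [sq_nonneg δ]) 3
                exact div_le_div_of_nonneg_left (by positivity) (by positivity) hle
            _ = δ ^ 3 * (α₅ ^ 2 / ‖x‖ ^ 6) := by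
                rw [show (‖x‖ ^ 2) ^ 3 = ‖x‖ ^ 6 by ring]
                ring
      _ = δ ^ 3 * C₀ := integral_const_mul _ _
      _ ≤ (C₀ + 1) * δ ^ 3 := by nlinarith [pow_pos hδ 3]
end
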